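/- arXiv:1705.00879 — 2 statements merged into one kernel-verified Lean document; each statement's English description precedes it below -/
import Mathlib

section
/- Let M ∈ ℤ^{d×d} be regular, m := |det M|, and let f be a function on the torus T^d lying in the Wiener algebra A(T^d). Then for every h ∈ G(M^T) the discrete Fourier coefficients of the samples of f on the pattern equal the bracket sum of its Fourier coefficients: (1/m) Σ_{y ∈ P(M)} f(2πy) e^{−2πi h·y} = [c(f)]_h^M = Σ_{z ∈ ℤ^d} c_{h + M^T z}(f). -/
open MeasureTheory Complex Matrix
open scoped BigOperators Classical

noncomputable section

namespace ElastFFT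

variable (d : ℕ)

/-- Real action of an integer matrix on a real vector. -/
def mulVecR (M : Matrix (Fin d) (Fin d) ℤ) (y : Fin d → ℝ) : Fin d → ℝ :=
  (M.map (Int.cast : ℤ → ℝ)).mulVec y

/-- The lattice Λ(M) = M⁻¹ ℤ^d. -/
def lattice (M : Matrix (Fin d) (Fin d) ℤ) : Set (Fin d → ℝ) :=
  {y | ∃ z : Fin d → ℤ, mulVecR d M y = fun i => (z i : ℝ)}

/-- The pattern P(M) = Λ(M) ∩ [-1/2, 1/2)^d. -/
def pattern (M : Matrix (Fin d) (Fin d) ℤ) : Set (Fin d → ℝ) :=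
  {y | y ∈ lattice d M ∧ ∀ i, y i ∈ Set.Ico (-(1/2) : ℝ) (1/2)}

/-- The generating set G(N) = ℤ^d ∩ N·[-1/2,1/2)^d. -/
def genSet (N : Matrix (Fin d) (Fin d) ℤ) : Set (Fin d → ℤ) :=
  {h | ∃ y : Fin d → ℝ, (∀ i, y i ∈ Set.Ico (-(1/2) : ℝ) (1/2)) ∧
        (fun i => (h i : ℝ)) = mulVecR d N y}

/-- The fundamental cell [-π, π)^d of the torus. -/
def cube : Set (Fin d → ℝ) := Set.univ.pi fun _ => Set.Ico (-Real.pi) Real.pi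

/-- Pairing of an integer frequency and a real point. -/
def dot (k : Fin d → ℤ) (x : Fin d → ℝ) : ℝ := ∑ i, (k i : ℝ) * x i

/-- A function on the torus: 2π-periodic in each coordinate. -/
def TorusFun (f : (Fin d → ℝ) → ℂ) : Prop :=
  ∀ (x : Fin d → ℝ) (z : Fin d → ℤ), f (x + fun i => 2 * Real.pi * (z i : ℝ)) = f x

/-- The L²(𝕋^d) inner product (normalised). -/
def torusInner (f g : (Fin d → ℝ) → ℂ) : ℂ :=
  (((2 * Real.pi) ^ d : ℝ) : ℂ)⁻¹ * ∫ x in cube d, f x * (starRingEnd ℂ) (g x)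

/-- Fourier coefficient c_k(f). -/
def fCoeff (f : (Fin d → ℝ) → ℂ) (k : Fin d → ℤ) : ℂ :=
  torusInner d f fun x => Complex.exp (Complex.I * (dot d k x : ℝ))

/-- Membership in the Wiener algebra A(𝕋^d). -/
def InWiener (f : (Fin d → ℝ) → ℂ) : Prop :=
  Summable (fun k : Fin d → ℤ => ‖fCoeff d f k‖) ∧
    ∀ x, HasSum (fun k : Fin d → ℤ =>
      fCoeff d f k * Complex.exp (Complex.I * (dot d k x : ℝ))) (f x)

/-- The translate T(y)f = f(· - 2πy). -/
def Tr (y : Fin d → ℝ) (f : (Fin d → ℝ) → ℂ) : (Fin d → ℝ) → ℂ :=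
  fun x => f (x - (2 * Real.pi) • y)

/-- The space of translates V_M^f, as a set of L² functions (a.e. equality on the cube). -/
def spanTranslates (M : Matrix (Fin d) (Fin d) ℤ) (f : (Fin d → ℝ) → ℂ) :
    Set ((Fin d → ℝ) → ℂ) :=
  {g | ∃ a : (Fin d → ℝ) → ℂ,
      g =ᵐ[volume.restrict (cube d)] fun x => ∑ᶠ y ∈ pattern d M, a y * Tr d y f x}

/-- Orthonormality of the translates of f on the pattern. -/
def OrthonormalTranslates (M : Matrix (Fin d) (Fin d) ℤ) (f : (Fin d → ℝ) → ℂ) : Prop :=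
  ∀ y ∈ pattern d M, ∀ y' ∈ pattern d M,
    torusInner d (Tr d y f) (Tr d y' f) = if y = y' then 1 else 0

/-- A fundamental interpolant of V_M^f. -/
def IsFundamentalInterpolant (M : Matrix (Fin d) (Fin d) ℤ) (f Λ : (Fin d → ℝ) → ℂ) : Prop :=
  Λ ∈ spanTranslates d M f ∧
    ∀ y ∈ pattern d M,
      Λ ((2 * Real.pi) • y) = if ∃ z : Fin d → ℤ, y = fun i => (z i : ℝ) then 1 else 0

/-- Frobenius inner product of complex matrices. -/
def frobInner (A B : Matrix (Fin d) (Fin d) ℂ) : ℂ :=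
  ∑ i, ∑ j, A i j * (starRingEnd ℂ) (B i j)

/-- Application of a fourth-order (real) tensor to a complex matrix. -/
def capply (C : Fin d → Fin d → Fin d → Fin d → ℝ) (γ : Matrix (Fin d) (Fin d) ℂ) :
    Matrix (Fin d) (Fin d) ℂ :=
  Matrix.of fun i j => ∑ a, ∑ b, (C i j a b : ℂ) * γ a b

/-- The usual symmetries of a stiffness tensor. -/
def TensorSymm (C : Fin d → Fin d → Fin d → Fin d → ℝ) : Prop :=
  ∀ i j k l, C i j k l = C j i k l ∧ C i j k l = C i j l k ∧ C i j k l = C k l i j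

/-- Positive definiteness of a reference stiffness on symmetric matrices. -/
def TensorPosDef (C : Fin d → Fin d → Fin d → Fin d → ℝ) : Prop :=
  ∃ c : ℝ, 0 < c ∧ ∀ γ : Matrix (Fin d) (Fin d) ℂ, γ.IsSymm →
    c * ∑ i, ∑ j, Complex.normSq (γ i j) ≤ (frobInner d (capply d C γ) γ).re

/-- The symmetrised gradient D_k u = (i/2)(k uᵀ + u kᵀ). -/
def symGrad (k : Fin d → ℝ) (u : Fin d → ℂ) : Matrix (Fin d) (Fin d) ℂ :=
  Matrix.of fun i j => (Complex.I / 2) * ((k i : ℂ) * u j + u i * (k j : ℂ))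

/-- The adjoint D_k* of the symmetrised gradient (w.r.t. Frobenius inner product). -/
def symGradAdj (k : Fin d → ℝ) (A : Matrix (Fin d) (Fin d) ℂ) : Fin d → ℂ :=
  fun j => ∑ i, (-Complex.I / 2) * (k i : ℂ) * (A i j + A j i)

/-- The acoustic tensor A(k) = D_k* ∘ C⁰ ∘ D_k as a d×d complex matrix. -/
def acoustic (C0 : Fin d → Fin d → Fin d → Fin d → ℝ) (k : Fin d → ℝ) :
    Matrix (Fin d) (Fin d) ℂ :=
  Matrix.of fun i j => symGradAdj d k (capply d C0 (symGrad d k (Pi.single j 1))) i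

/-- The Green operator symbol Γ̂⁰_k = D_k ∘ A(k)⁻¹ ∘ D_k* for real k ≠ 0. -/
def greenSymR (C0 : Fin d → Fin d → Fin d → Fin d → ℝ) (k : Fin d → ℝ)
    (E : Matrix (Fin d) (Fin d) ℂ) : Matrix (Fin d) (Fin d) ℂ :=
  symGrad d k ((acoustic d C0 k)⁻¹.mulVec (symGradAdj d k E))

/-- The Green operator symbol for integer frequencies, Γ̂⁰_0 := 0. -/
def greenSymZ (C0 : Fin d → Fin d → Fin d → Fin d → ℝ) (k : Fin d → ℤ)
    (E : Matrix (Fin d) (Fin d) ℂ) : Matrix (Fin d) (Fin d) ℂ :=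
  if k = 0 then 0 else greenSymR d C0 (fun i => (k i : ℝ)) E

/-- Entrywise Fourier coefficient of a matrix field. -/
def mFourier (ε : (Fin d → ℝ) → Matrix (Fin d) (Fin d) ℂ) (k : Fin d → ℤ) :
    Matrix (Fin d) (Fin d) ℂ :=
  Matrix.of fun i j => fCoeff d (fun x => ε x i j) k

/-- The periodised Green symbol Γ̂^p_h = m Σ_z Γ̂⁰_{h+Mᵀz} |c_{h+Mᵀz}(f)|². -/
def gammaPSym (M : Matrix (Fin d) (Fin d) ℤ) (C0 : Fin d → Fin d → Fin d → Fin d → ℝ)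
    (f : (Fin d → ℝ) → ℂ) (h : Fin d → ℤ) (E : Matrix (Fin d) (Fin d) ℂ) :
    Matrix (Fin d) (Fin d) ℂ :=
  (M.det.natAbs : ℂ) • ∑' z : Fin d → ℤ,
    ((Complex.normSq (fCoeff d f (h + Matrix.mulVec Mᵀ z)) : ℝ) : ℂ) •
      greenSymZ d C0 (h + Matrix.mulVec Mᵀ z) E

/-- The periodised Green operator applied to a coefficient field: DFT, multiply, inverse DFT. -/
def gammaP (M : Matrix (Fin d) (Fin d) ℤ) (C0 : Fin d → Fin d → Fin d → Fin d → ℝ)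
    (f : (Fin d → ℝ) → ℂ) (V : (Fin d → ℝ) → Matrix (Fin d) (Fin d) ℂ)
    (x : Fin d → ℝ) : Matrix (Fin d) (Fin d) ℂ :=
  ((M.det.natAbs : ℂ))⁻¹ • ∑ᶠ h ∈ genSet d Mᵀ,
    Complex.exp (2 * Real.pi * Complex.I * (dot d h x : ℝ)) •
      gammaPSym d M C0 f h
        (∑ᶠ y ∈ pattern d M, Complex.exp (-(2 * Real.pi * Complex.I) * (dot d h y : ℝ)) • V y)

/-- The Dirichlet kernel D_M. -/
def dirichlet (M : Matrix (Fin d) (Fin d) ℤ) : (Fin d → ℝ) → ℂ :=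
  fun x => ∑ᶠ h ∈ genSet d Mᵀ, Complex.exp (Complex.I * (dot d h x : ℝ))


/-! ### Auxiliary lemmas -/

section Aux

def cV (z : Fin d → ℤ) : Fin d → ℝ := fun i => (z i : ℝ)

variable {d}

lemma cV_inj : Function.Injective (cV d) := by
  intro a b h
  funext i
  have := congrFun h i
  simpa [cV] using this

lemma cV_add (a b : Fin d → ℤ) : cV d (a + b) = cV d a + cV d b := by
  funext i; simp [cV]

lemma cV_mulVec (M : Matrix (Fin d) (Fin d) ℤ) (z : Fin d → ℤ) :
    cV d (M.mulVec z) = (M.map (Int.cast : ℤ → ℝ)).mulVec (cV d z) := by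
  funext i
  simp [cV, Matrix.mulVec, dotProduct]

lemma det_map_ne_zero {M : Matrix (Fin d) (Fin d) ℤ} (hM : M.det ≠ 0) :
    (M.map (Int.cast : ℤ → ℝ)).det ≠ 0 := by
  rw [show M.map (Int.cast : ℤ → ℝ) = (Int.castRingHom ℝ).mapMatrix M from rfl,
    ← RingHom.map_det]
  simp only [map_intCast, eq_intCast, ne_eq, Int.cast_eq_zero]
  exact hM

lemma int_mulVec_injective (M : Matrix (Fin d) (Fin d) ℤ) (hM : M.det ≠ 0) :
    Function.Injective fun z : Fin d → ℤ => M.mulVec z := by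
  intro a b h
  have h' : M.mulVec a = M.mulVec b := h
  apply cV_inj
  have h2 : (M.map (Int.cast : ℤ → ℝ)).mulVec (cV d a)
      = (M.map (Int.cast : ℤ → ℝ)).mulVec (cV d b) := by
    rw [← cV_mulVec, ← cV_mulVec, h']
  have hinv : (M.map (Int.cast : ℤ → ℝ))⁻¹ * (M.map (Int.cast : ℤ → ℝ)) = 1 :=
    Matrix.nonsing_inv_mul _ (isUnit_iff_ne_zero.mpr (det_map_ne_zero hM))
  have := congrArg ((M.map (Int.cast : ℤ → ℝ))⁻¹.mulVec) h2
  rwa [Matrix.mulVec_mulVec, Matrix.mulVec_mulVec, hinv, Matrix.one_mulVec,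
    Matrix.one_mulVec] at this

lemma inv_mulVec_mulVec {M : Matrix (Fin d) (Fin d) ℤ} (hM : M.det ≠ 0) (x : Fin d → ℝ) :
    (M.map (Int.cast : ℤ → ℝ))⁻¹.mulVec ((M.map (Int.cast : ℤ → ℝ)).mulVec x) = x := by
  rw [Matrix.mulVec_mulVec,
    Matrix.nonsing_inv_mul _ (isUnit_iff_ne_zero.mpr (det_map_ne_zero hM)), Matrix.one_mulVec]

lemma mulVec_inv_mulVec {M : Matrix (Fin d) (Fin d) ℤ} (hM : M.det ≠ 0) (x : Fin d → ℝ) :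
    (M.map (Int.cast : ℤ → ℝ)).mulVec ((M.map (Int.cast : ℤ → ℝ))⁻¹.mulVec x) = x := by
  rw [Matrix.mulVec_mulVec,
    Matrix.mul_nonsing_inv _ (isUnit_iff_ne_zero.mpr (det_map_ne_zero hM)), Matrix.one_mulVec]

lemma index_range_mulVecLin (M : Matrix (Fin d) (Fin d) ℤ) (hM : M.det ≠ 0) :
    (LinearMap.range M.mulVecLin).toAddSubgroup.index = M.det.natAbs := by
  classical
  set N := LinearMap.range M.mulVecLin with hN
  obtain ⟨n, snf⟩ := N.smithNormalForm (Pi.basisFun ℤ (Fin d))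
  have hinj : Function.Injective M.mulVecLin := int_mulVec_injective M hM
  let e0 : (Fin d → ℤ) ≃ₗ[ℤ] N := LinearEquiv.ofInjective _ hinj
  have hnd : n = d := by
    have hc := card_eq_of_linearEquiv ℤ (snf.bN.equivFun.symm.trans e0.symm)
    simpa using hc
  subst hnd
  rw [snf.toAddSubgroup_index_eq_ite, if_pos (by simp)]
  simp only [Ideal.span_singleton_toAddSubgroup_eq_zmultiples, Int.index_zmultiples]
  have key : (∏ i, snf.a i).natAbs = M.det.natAbs := by
    let D : (Fin n → ℤ) →ₗ[ℤ] (Fin n → ℤ) := Matrix.toLin' (Matrix.diagonal snf.a)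
    have hfb : Function.Bijective snf.f := (Finite.injective_iff_bijective).mp snf.f.injective
    let σ : Fin n ≃ Fin n := Equiv.ofBijective snf.f hfb
    let τ : (Fin n → ℤ) ≃ₗ[ℤ] (Fin n → ℤ) := LinearEquiv.funCongrLeft ℤ ℤ σ.symm
    let bM := snf.bM
    let g2 : (Fin n → ℤ) ≃ₗ[ℤ] (Fin n → ℤ) := τ.trans bM.equivFun.symm
    let g : (Fin n → ℤ) →ₗ[ℤ] (Fin n → ℤ) :=
      N.subtype ∘ₗ (snf.bN.equivFun.symm : (Fin n → ℤ) ≃ₗ[ℤ] N).toLinearMap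
    have hg1 : g = g2.toLinearMap ∘ₗ D := by
      apply LinearMap.ext
      intro c
      have lhs : g c = ∑ i, c i • (snf.bN i : Fin n → ℤ) := by
        simp [g, Module.Basis.equivFun_symm_apply]
      have rhs : (g2.toLinearMap ∘ₗ D) c = ∑ i, (snf.a i * c i) • bM (σ i) := by
        simp only [LinearMap.comp_apply, LinearEquiv.coe_coe]
        have hD : D c = fun i => snf.a i * c i := by
          funext i
          simp [D, Matrix.toLin'_apply, Matrix.mulVec_diagonal]
        rw [hD]
        simp only [g2, LinearEquiv.trans_apply, Module.Basis.equivFun_symm_apply]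
        rw [← Equiv.sum_comp σ (fun j => (τ fun i => snf.a i * c i) j • bM j)]
        congr 1
        funext i
        congr 1
        simp [τ, LinearEquiv.funCongrLeft_apply, LinearMap.funLeft_apply]
      rw [lhs, rhs]
      congr 1
      funext i
      have hsnf : (snf.bN i : Fin n → ℤ) = snf.a i • bM (snf.f i) := snf.snf i
      rw [hsnf]
      have hσ : σ i = snf.f i := rfl
      rw [hσ, smul_smul, mul_comm]
    have hg2 : g = M.mulVecLin ∘ₗ (snf.bN.equivFun.symm.trans e0.symm).toLinearMap := by
      apply LinearMap.ext
      intro c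
      simp only [LinearMap.comp_apply, LinearEquiv.coe_coe, LinearEquiv.trans_apply]
      have : M.mulVecLin (e0.symm (snf.bN.equivFun.symm c)) = ↑(snf.bN.equivFun.symm c) := by
        exact LinearEquiv.ofInjective_symm_apply (f := M.mulVecLin) (h := hinj) _
      rw [this]
      simp [g]
    have hd1 : LinearMap.det g = LinearMap.det (g2.toLinearMap) * (∏ i, snf.a i) := by
      rw [hg1, LinearMap.det_comp]
      congr 1
      rw [show D = Matrix.toLin' (Matrix.diagonal snf.a) from rfl, LinearMap.det_toLin',
        Matrix.det_diagonal]
    have hd2 : LinearMap.det g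
        = M.det * LinearMap.det (snf.bN.equivFun.symm.trans e0.symm).toLinearMap := by
      rw [hg2, LinearMap.det_comp]
      congr 1
      rw [show M.mulVecLin = Matrix.toLin' M from rfl, LinearMap.det_toLin']
    have hu1 : IsUnit (LinearMap.det g2.toLinearMap) := g2.isUnit_det'
    have hu2 : IsUnit (LinearMap.det (snf.bN.equivFun.symm.trans e0.symm).toLinearMap) :=
      (snf.bN.equivFun.symm.trans e0.symm).isUnit_det'
    have h12 : LinearMap.det g2.toLinearMap * (∏ i, snf.a i)
        = M.det * LinearMap.det (snf.bN.equivFun.symm.trans e0.symm).toLinearMap := by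
      rw [← hd1, ← hd2]
    have h13 := congrArg Int.natAbs h12
    rw [Int.natAbs_mul, Int.natAbs_mul] at h13
    rcases Int.isUnit_iff.mp hu1 with h1 | h1 <;> rcases Int.isUnit_iff.mp hu2 with h2 | h2 <;>
      rw [h1, h2] at h13 <;> simpa using h13
  rw [show ∏ i, (snf.a i).natAbs = (∏ i, snf.a i).natAbs from
    (map_prod Int.natAbsHom snf.a Finset.univ).symm, key]

/-! ### dot product lemmas -/

lemma dot_add_right (l : Fin d → ℤ) (x x' : Fin d → ℝ) :
    dot d l (x + x') = dot d l x + dot d l x' := by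
  simp [dot, mul_add, Finset.sum_add_distrib]

lemma dot_smul_right (l : Fin d → ℤ) (c : ℝ) (x : Fin d → ℝ) :
    dot d l (c • x) = c * dot d l x := by
  simp only [dot, Pi.smul_apply, smul_eq_mul, Finset.mul_sum]
  congr 1; funext i; ring

lemma dot_sub_left (k h : Fin d → ℤ) (y : Fin d → ℝ) :
    dot d (k - h) y = dot d k y - dot d h y := by
  simp only [dot, Pi.sub_apply, Int.cast_sub, sub_mul, Finset.sum_sub_distrib]

lemma dot_cV (l w : Fin d → ℤ) : dot d l (cV d w) = ((∑ i, l i * w i : ℤ) : ℝ) := by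
  simp [dot, cV]

lemma dot_transpose (M : Matrix (Fin d) (Fin d) ℤ) (z : Fin d → ℤ) (x : Fin d → ℝ) :
    dot d (Mᵀ.mulVec z) x = ∑ j, (z j : ℝ) * ((M.map (Int.cast : ℤ → ℝ)).mulVec x) j := by
  simp only [dot, Matrix.mulVec, dotProduct, Matrix.transpose_apply, Matrix.map_apply]
  push_cast
  simp only [Finset.sum_mul, Finset.mul_sum]
  rw [Finset.sum_comm]
  exact Finset.sum_congr rfl fun j _ => Finset.sum_congr rfl fun i _ => by ring

/-! ### exponential lemmas -/

lemma exp_two_pi_int (r : ℝ) (m : ℤ) :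
    Complex.exp (2 * Real.pi * Complex.I * ((r + (m : ℝ) : ℝ) : ℂ))
      = Complex.exp (2 * Real.pi * Complex.I * (r : ℂ)) := by
  push_cast
  rw [mul_add, Complex.exp_add]
  rw [show 2 * (Real.pi : ℂ) * Complex.I * (m : ℂ) = (m : ℂ) * (2 * Real.pi * Complex.I) by ring]
  rw [Complex.exp_int_mul_two_pi_mul_I]
  ring

lemma int_of_exp_eq_one {r : ℝ}
    (h : Complex.exp (2 * Real.pi * Complex.I * (r : ℂ)) = 1) : ∃ m : ℤ, (m : ℝ) = r := by
  rw [Complex.exp_eq_one_iff] at h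
  obtain ⟨m, hm⟩ := h
  refine ⟨m, ?_⟩
  have h2 : (2 * Real.pi * Complex.I) ≠ 0 := by
    simp [Real.pi_ne_zero, Complex.I_ne_zero]
  have : (r : ℂ) = (m : ℂ) := by
    apply mul_left_cancel₀ h2
    rw [hm]; ring
  exact_mod_cast this.symm

lemma norm_exp_I_mul (r : ℝ) : ‖Complex.exp (Complex.I * (r : ℂ))‖ = 1 := by
  rw [Complex.norm_exp]
  simp [Complex.mul_re]

lemma norm_exp_neg_two_pi (r : ℝ) :
    ‖Complex.exp (-(2 * Real.pi * Complex.I) * (r : ℂ))‖ = 1 := by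
  rw [Complex.norm_exp]
  simp [Complex.mul_re]

end Aux

section Aux2

variable {d : ℕ}

/-! ### the fractional representative -/

def f2 (t : ℝ) : ℝ := Int.fract (t + 1/2) - 1/2

lemma f2_mem (t : ℝ) : f2 t ∈ Set.Ico (-(1/2) : ℝ) (1/2) := by
  have h1 := Int.fract_nonneg (t + 1/2)
  have h2 := Int.fract_lt_one (t + 1/2)
  constructor <;> simp only [f2] <;> linarith

lemma f2_eq (t : ℝ) : f2 t = t - (⌊t + 1/2⌋ : ℝ) := by
  simp only [f2, Int.fract]
  ring

lemma f2_add_int (t : ℝ) (m : ℤ) : f2 (t + m) = f2 t := by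
  simp only [f2, add_right_comm t (m : ℝ) (1/2), Int.fract_add_intCast]

lemma f2_self {t : ℝ} (h : t ∈ Set.Ico (-(1/2) : ℝ) (1/2)) : f2 t = t := by
  have : Int.fract (t + 1/2) = t + 1/2 :=
    Int.fract_eq_self.mpr ⟨by linarith [h.1], by linarith [h.2]⟩
  simp only [f2, this]
  ring

lemma cV_sub (a b : Fin d → ℤ) : cV d (a - b) = cV d a - cV d b := by
  funext i; simp [cV]

lemma mulVecR_eq (M : Matrix (Fin d) (Fin d) ℤ) (y : Fin d → ℝ) :
    mulVecR d M y = (M.map (Int.cast : ℤ → ℝ)).mulVec y := rfl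

def repv (M : Matrix (Fin d) (Fin d) ℤ) (n : Fin d → ℤ) : Fin d → ℝ :=
  fun i => f2 (((M.map (Int.cast : ℤ → ℝ))⁻¹.mulVec (cV d n)) i)

def zfl (M : Matrix (Fin d) (Fin d) ℤ) (n : Fin d → ℤ) : Fin d → ℤ :=
  fun i => ⌊((M.map (Int.cast : ℤ → ℝ))⁻¹.mulVec (cV d n)) i + 1/2⌋

lemma repv_eq (M : Matrix (Fin d) (Fin d) ℤ) (n : Fin d → ℤ) :
    repv M n = (M.map (Int.cast : ℤ → ℝ))⁻¹.mulVec (cV d n) - cV d (zfl M n) := by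
  funext i
  rw [repv, f2_eq]
  rfl

lemma mulVecR_repv {M : Matrix (Fin d) (Fin d) ℤ} (hM : M.det ≠ 0) (n : Fin d → ℤ) :
    mulVecR d M (repv M n) = cV d (n - M.mulVec (zfl M n)) := by
  rw [repv_eq, mulVecR_eq, Matrix.mulVec_sub, mulVec_inv_mulVec hM, cV_sub, cV_mulVec]

lemma repv_mem {M : Matrix (Fin d) (Fin d) ℤ} (hM : M.det ≠ 0) (n : Fin d → ℤ) :
    repv M n ∈ pattern d M := by
  refine ⟨⟨n - M.mulVec (zfl M n), ?_⟩, fun i => f2_mem _⟩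
  rw [mulVecR_repv hM]
  rfl

lemma repv_add_mul {M : Matrix (Fin d) (Fin d) ℤ} (hM : M.det ≠ 0) (n w : Fin d → ℤ) :
    repv M (n + M.mulVec w) = repv M n := by
  have key : (M.map (Int.cast : ℤ → ℝ))⁻¹.mulVec (cV d (n + M.mulVec w))
      = (M.map (Int.cast : ℤ → ℝ))⁻¹.mulVec (cV d n) + cV d w := by
    rw [cV_add, cV_mulVec, Matrix.mulVec_add, inv_mulVec_mulVec hM]
  funext i
  rw [repv, repv, key]
  exact f2_add_int _ (w i)

lemma repv_pattern {M : Matrix (Fin d) (Fin d) ℤ} (hM : M.det ≠ 0) {y : Fin d → ℝ}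
    (hy : y ∈ pattern d M) {n : Fin d → ℤ} (hn : mulVecR d M y = cV d n) :
    repv M n = y := by
  have key : (M.map (Int.cast : ℤ → ℝ))⁻¹.mulVec (cV d n) = y := by
    rw [← hn, mulVecR_eq, inv_mulVec_mulVec hM]
  funext i
  rw [repv, key]
  exact f2_self (hy.2 i)

lemma pattern_intvec {M : Matrix (Fin d) (Fin d) ℤ} {y : Fin d → ℝ} (hy : y ∈ pattern d M) :
    mulVecR d M y = cV d (fun i => ⌊mulVecR d M y i⌋) := by
  obtain ⟨z, hz⟩ := hy.1
  rw [hz]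
  funext i
  simp [cV]

lemma pattern_finite (M : Matrix (Fin d) (Fin d) ℤ) (hM : M.det ≠ 0) :
    (pattern d M).Finite := by
  classical
  set C : ℤ := ∑ i, ∑ j, |M i j| with hC
  have hbound : ∀ y ∈ pattern d M, ∀ i, (fun i => ⌊mulVecR d M y i⌋) i ∈ Set.Icc (-C) C := by
    intro y hy i
    have habs : |mulVecR d M y i| ≤ (C : ℝ) := by
      have hexp : mulVecR d M y i = ∑ j, (M i j : ℝ) * y j := by
        simp [mulVecR_eq, Matrix.mulVec, dotProduct]
      rw [hexp]
      calc |∑ j, (M i j : ℝ) * y j| ≤ ∑ j, |(M i j : ℝ) * y j| :=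
            Finset.abs_sum_le_sum_abs _ _
        _ ≤ ∑ j, |(M i j : ℝ)| := by
            refine Finset.sum_le_sum fun j _ => ?_
            rw [abs_mul]
            have hyj : |y j| ≤ 1 := by
              have := hy.2 j
              rw [abs_le]
              constructor <;> [linarith [this.1]; linarith [this.2]]
            nlinarith [abs_nonneg ((M i j : ℝ))]
        _ ≤ (C : ℝ) := by
            rw [hC]
            push_cast
            exact Finset.single_le_sum
              (f := fun i => ∑ j, |(M i j : ℝ)|)
              (fun k _ => Finset.sum_nonneg fun j _ => abs_nonneg _) (Finset.mem_univ i)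
    have hfl : (⌊mulVecR d M y i⌋ : ℝ) = mulVecR d M y i := by
      rw [congrFun (pattern_intvec hy) i]
      simp [cV]
    have : |(⌊mulVecR d M y i⌋ : ℝ)| ≤ (C : ℝ) := by rw [hfl]; exact habs
    have h2 := abs_le.mp this
    constructor
    · exact_mod_cast h2.1
    · exact_mod_cast h2.2
  have hfin : (Set.pi Set.univ fun _ : Fin d => Set.Icc (-C) C).Finite :=
    Set.Finite.pi fun _ => Set.finite_Icc _ _
  apply Set.Finite.of_finite_image (f := fun y => fun i => ⌊mulVecR d M y i⌋)
  · refine hfin.subset ?_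
    rintro _ ⟨y, hy, rfl⟩
    intro i _
    exact hbound y hy i
  · intro y hy y' hy' hxy
    have h1 := pattern_intvec hy
    have h2 := pattern_intvec hy'
    have hm : mulVecR d M y = mulVecR d M y' := by
      rw [h1, h2]
      exact congrArg (cV d) hxy
    have := congrArg ((M.map (Int.cast : ℤ → ℝ))⁻¹.mulVec) hm
    rwa [mulVecR_eq, mulVecR_eq, inv_mulVec_mulVec hM, inv_mulVec_mulVec hM] at this

/-! ### characters on the quotient -/

def Hq (M : Matrix (Fin d) (Fin d) ℤ) : AddSubgroup (Fin d → ℤ) :=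
  (LinearMap.range M.mulVecLin).toAddSubgroup

lemma mem_Hq {M : Matrix (Fin d) (Fin d) ℤ} {n : Fin d → ℤ} :
    n ∈ Hq M ↔ ∃ w, M.mulVec w = n := Iff.rfl

def eL (l : Fin d → ℤ) (y : Fin d → ℝ) : ℂ :=
  Complex.exp (2 * Real.pi * Complex.I * ((dot d l y : ℝ) : ℂ))

lemma eL_add_cV (l : Fin d → ℤ) (x : Fin d → ℝ) (w : Fin d → ℤ) :
    eL l (x + cV d w) = eL l x := by
  rw [eL, eL, dot_add_right, dot_cV]
  exact exp_two_pi_int _ _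

lemma eL_add_arg (l : Fin d → ℤ) (x x' : Fin d → ℝ) :
    eL l (x + x') = eL l x * eL l x' := by
  rw [eL, eL, eL, dot_add_right]
  push_cast
  rw [mul_add, Complex.exp_add]

def Gch (M : Matrix (Fin d) (Fin d) ℤ) (hM : M.det ≠ 0) (l : Fin d → ℤ) :
    ((Fin d → ℤ) ⧸ Hq M) → ℂ :=
  fun q => Quotient.liftOn' q
    (fun n => eL l ((M.map (Int.cast : ℤ → ℝ))⁻¹.mulVec (cV d n)))
    (by
      intro a b hab
      rw [QuotientAddGroup.leftRel_apply] at hab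
      obtain ⟨w, hw⟩ := mem_Hq.mp hab
      have hb : b = a + M.mulVec w := by
        have : M.mulVec w = -a + b := hw
        rw [this]; abel
      rw [hb, cV_add, cV_mulVec, Matrix.mulVec_add, inv_mulVec_mulVec hM, eL_add_cV])

lemma Gch_mk (M : Matrix (Fin d) (Fin d) ℤ) (hM : M.det ≠ 0) (l n) :
    Gch M hM l (QuotientAddGroup.mk n)
      = eL l ((M.map (Int.cast : ℤ → ℝ))⁻¹.mulVec (cV d n)) := rfl

lemma Gch_add (M : Matrix (Fin d) (Fin d) ℤ) (hM : M.det ≠ 0) (l : Fin d → ℤ)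
    (q q' : (Fin d → ℤ) ⧸ Hq M) :
    Gch M hM l (q + q') = Gch M hM l q * Gch M hM l q' := by
  refine QuotientAddGroup.induction_on q fun a => ?_
  refine QuotientAddGroup.induction_on q' fun b => ?_
  rw [← QuotientAddGroup.mk_add, Gch_mk, Gch_mk, Gch_mk, cV_add, Matrix.mulVec_add, eL_add_arg]

lemma charSum (M : Matrix (Fin d) (Fin d) ℤ) (hM : M.det ≠ 0) (l : Fin d → ℤ)
    (P : Finset (Fin d → ℝ)) (hP : ↑P = pattern d M) :
    ∑ y ∈ P, eL l y = if ∃ z, l = Mᵀ.mulVec z then ((M.det.natAbs : ℕ) : ℂ) else 0 := by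
  classical
  have hidx : (Hq M).index = M.det.natAbs := index_range_mulVecLin M hM
  have hfinQ : Finite ((Fin d → ℤ) ⧸ Hq M) := by
    have hne : Nat.card ((Fin d → ℤ) ⧸ Hq M) ≠ 0 := by
      rw [← AddSubgroup.index_eq_card, hidx]
      simpa using hM
    exact Nat.finite_of_card_ne_zero hne
  letI := Fintype.ofFinite ((Fin d → ℤ) ⧸ Hq M)
  have hstep : ∑ y ∈ P, eL l y = ∑ q : (Fin d → ℤ) ⧸ Hq M, Gch M hM l q := by
    refine Finset.sum_nbij' (fun y => QuotientAddGroup.mk (fun i => ⌊mulVecR d M y i⌋))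
      (fun q => repv M q.out) (fun y _ => Finset.mem_univ _)
      (fun q _ => by
        have := repv_mem hM q.out
        rwa [← hP, Finset.mem_coe] at this) ?_ ?_ ?_
    · -- left inverse
      intro y hy
      have hyp : y ∈ pattern d M := hP ▸ hy
      set n : Fin d → ℤ := fun i => ⌊mulVecR d M y i⌋ with hn
      obtain ⟨b, hb⟩ : ∃ b, (QuotientAddGroup.mk n : (Fin d → ℤ) ⧸ Hq M).out = b := ⟨_, rfl⟩
      have hout : (QuotientAddGroup.mk b : (Fin d → ℤ) ⧸ Hq M) = QuotientAddGroup.mk n := by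
        rw [← hb]; exact Quotient.out_eq' _
      have hrel : -b + n ∈ Hq M := (QuotientAddGroup.eq).mp hout
      obtain ⟨w, hw⟩ := mem_Hq.mp hrel
      have hnw : n = b + M.mulVec w := by
        rw [hw]; abel
      have h1 : repv M n = y := repv_pattern hM hyp (pattern_intvec hyp)
      show repv M (QuotientAddGroup.mk n : (Fin d → ℤ) ⧸ Hq M).out = y
      rw [hb]
      rw [hnw] at h1
      rw [repv_add_mul hM b w] at h1
      exact h1
    · -- right inverse
      intro q _
      have hq : QuotientAddGroup.mk q.out = q := Quotient.out_eq' q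
      set n := q.out with hn
      have hfl : (fun i => ⌊mulVecR d M (repv M n) i⌋) = n - M.mulVec (zfl M n) := by
        funext i
        rw [congrFun (mulVecR_repv hM n) i]
        simp [cV]
      show QuotientAddGroup.mk (fun i => ⌊mulVecR d M (repv M n) i⌋) = q
      rw [hfl, ← hq]
      refine (QuotientAddGroup.eq).mpr ?_
      exact mem_Hq.mpr ⟨zfl M n, by abel⟩
    · -- summand
      intro y hy
      have hyp : y ∈ pattern d M := hP ▸ hy
      rw [Gch_mk]
      congr 1
      rw [← pattern_intvec hyp, mulVecR_eq, inv_mulVec_mulVec hM]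
  rw [hstep]
  by_cases hcond : ∃ z, l = Mᵀ.mulVec z
  · obtain ⟨z, rfl⟩ := hcond
    rw [if_pos ⟨z, rfl⟩]
    have hone : ∀ q : (Fin d → ℤ) ⧸ Hq M, Gch M hM (Mᵀ.mulVec z) q = 1 := by
      intro q
      refine QuotientAddGroup.induction_on q fun n => ?_
      rw [Gch_mk, eL, dot_transpose, mulVec_inv_mulVec hM]
      have hint : (∑ j, (z j : ℝ) * cV d n j) = ((∑ j, z j * n j : ℤ) : ℝ) := by
        push_cast [cV]
        rfl
      rw [hint]
      have := exp_two_pi_int 0 (∑ j, z j * n j)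
      simpa using this
    simp only [hone, Finset.sum_const, Finset.card_univ, nsmul_eq_mul, mul_one]
    rw [← Nat.card_eq_fintype_card, ← AddSubgroup.index_eq_card, hidx]
  · rw [if_neg hcond]
    by_cases hall : ∀ n : Fin d → ℤ, Gch M hM l (QuotientAddGroup.mk n) = 1
    · exfalso
      apply hcond
      have hr : ∀ n : Fin d → ℤ, ∃ m : ℤ,
          (m : ℝ) = dot d l ((M.map (Int.cast : ℤ → ℝ))⁻¹.mulVec (cV d n)) := by
        intro n
        have := hall n
        rw [Gch_mk, eL] at this
        exact int_of_exp_eq_one this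
      choose mfun hm using fun j => hr (Pi.single j 1)
      refine ⟨mfun, ?_⟩
      apply cV_inj
      have hMT : (Mᵀ).det ≠ 0 := by rwa [Matrix.det_transpose]
      have hmf : cV d mfun = ((Mᵀ).map (Int.cast : ℤ → ℝ))⁻¹.mulVec (cV d l) := by
        funext j
        rw [Matrix.transpose_map, ← Matrix.transpose_nonsing_inv]
        have hsingle : (M.map (Int.cast : ℤ → ℝ))⁻¹.mulVec (cV d (Pi.single j 1))
            = fun i => (M.map (Int.cast : ℤ → ℝ))⁻¹ i j := by
          have : cV d (Pi.single j 1) = Pi.single j (1 : ℝ) := by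
            funext i
            simp [cV, Pi.single_apply]
          rw [this, Matrix.mulVec_single]
          funext i
          simp
        have := hm j
        rw [hsingle] at this
        show (mfun j : ℝ) = _
        rw [this, dot]
        simp only [Matrix.mulVec, dotProduct, Matrix.transpose_apply]
        exact Finset.sum_congr rfl fun i _ => by simp [cV]; ring
      rw [cV_mulVec, hmf, mulVec_inv_mulVec hMT]
    · push_neg at hall
      obtain ⟨n₀, hn₀⟩ := hall
      set S := ∑ q : (Fin d → ℤ) ⧸ Hq M, Gch M hM l q with hS
      have htrans : S = Gch M hM l (QuotientAddGroup.mk n₀) * S := by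
        have h1 : S = ∑ q : (Fin d → ℤ) ⧸ Hq M,
            Gch M hM l (QuotientAddGroup.mk n₀ + q) := by
          exact (Fintype.sum_equiv (Equiv.addLeft (QuotientAddGroup.mk n₀))
            (fun q => Gch M hM l (QuotientAddGroup.mk n₀ + q)) (Gch M hM l)
            (fun q => rfl)).symm
        calc S = ∑ q : (Fin d → ℤ) ⧸ Hq M, Gch M hM l (QuotientAddGroup.mk n₀ + q) := h1
          _ = ∑ q : (Fin d → ℤ) ⧸ Hq M,
              Gch M hM l (QuotientAddGroup.mk n₀) * Gch M hM l q := by simp_rw [Gch_add]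
          _ = Gch M hM l (QuotientAddGroup.mk n₀) * S := by rw [← Finset.mul_sum, ← hS]
      have hzero : (Gch M hM l (QuotientAddGroup.mk n₀) - 1) * S = 0 := by
        rw [sub_mul, one_mul, ← htrans, sub_self]
      rcases mul_eq_zero.mp hzero with h | h
      · exact absurd (sub_eq_zero.mp h) hn₀
      · exact h

end Aux2

section Aux3

variable {d : ℕ}

lemma exp_combine (k h : Fin d → ℤ) (y : Fin d → ℝ) :
    Complex.exp (Complex.I * ((dot d k ((2 * Real.pi) • y) : ℝ) : ℂ)) *
      Complex.exp (-(2 * Real.pi * Complex.I) * ((dot d h y : ℝ) : ℂ)) = eL (k - h) y := by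
  rw [eL, ← Complex.exp_add, dot_smul_right, dot_sub_left]
  congr 1
  push_cast
  ring

lemma norm_eL (l : Fin d → ℤ) (y : Fin d → ℝ) : ‖eL l y‖ = 1 := by
  rw [eL, Complex.norm_exp]
  have hre : (2 * Real.pi * Complex.I * ((dot d l y : ℝ) : ℂ)).re = 0 := by
    simp [Complex.mul_re]
  rw [hre, Real.exp_zero]

lemma summable_term (f : (Fin d → ℝ) → ℂ) (hfW : InWiener d f) (h : Fin d → ℤ)
    (y : Fin d → ℝ) :
    Summable fun k : Fin d → ℤ => fCoeff d f k * eL (k - h) y := by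
  apply Summable.of_norm
  have hnorm : (fun k : Fin d → ℤ => ‖fCoeff d f k * eL (k - h) y‖)
      = fun k => ‖fCoeff d f k‖ := by
    funext k
    rw [norm_mul, norm_eL, mul_one]
  rw [hnorm]
  exact hfW.1

end Aux3

/-- discrete Fourier coefficients of samples equal the bracket sums. -/
theorem dft_samples_eq_bracketSum
    (d : ℕ) (hd : 0 < d)
    (M : Matrix (Fin d) (Fin d) ℤ) (hM : M.det ≠ 0)
    (f : (Fin d → ℝ) → ℂ) (hfper : TorusFun d f) (hfW : InWiener d f) :
    ∀ h ∈ genSet d Mᵀ,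
      (M.det.natAbs : ℂ)⁻¹ *
        ∑ᶠ y ∈ pattern d M,
          f ((2 * Real.pi) • y) *
            Complex.exp (-(2 * Real.pi * Complex.I) * (dot d h y : ℝ)) =
      ∑' z : Fin d → ℤ, fCoeff d f (h + Matrix.mulVec Mᵀ z) := by
  intro h _
  classical
  have hfin : (pattern d M).Finite := pattern_finite M hM
  have hm0 : ((M.det.natAbs : ℕ) : ℂ) ≠ 0 := by
    simp only [ne_eq, Nat.cast_eq_zero, Int.natAbs_eq_zero]
    exact hM
  have hPc : (hfin.toFinset : Set (Fin d → ℝ)) = pattern d M := hfin.coe_toFinset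
  rw [← hPc, finsum_mem_coe_finset]
  have hterm : ∀ y ∈ hfin.toFinset,
      f ((2 * Real.pi) • y) * Complex.exp (-(2 * Real.pi * Complex.I) * ((dot d h y : ℝ) : ℂ))
        = ∑' k : Fin d → ℤ, fCoeff d f k * eL (k - h) y := by
    intro y _
    rw [← (hfW.2 ((2 * Real.pi) • y)).tsum_eq, ← tsum_mul_right]
    exact tsum_congr fun k => by rw [mul_assoc, exp_combine]
  rw [Finset.sum_congr rfl hterm, ← Summable.tsum_finsetSum (fun y _ => summable_term f hfW h y)]
  have h2 : ∀ k : Fin d → ℤ, ∑ y ∈ hfin.toFinset, fCoeff d f k * eL (k - h) y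
      = fCoeff d f k * (if ∃ z, k - h = Mᵀ.mulVec z then ((M.det.natAbs : ℕ) : ℂ) else 0) := by
    intro k
    rw [← Finset.mul_sum, charSum M hM (k - h) hfin.toFinset hPc]
  rw [tsum_congr h2, ← tsum_mul_left]
  have h3 : ∀ k : Fin d → ℤ,
      ((M.det.natAbs : ℕ) : ℂ)⁻¹ * (fCoeff d f k *
        (if ∃ z, k - h = Mᵀ.mulVec z then ((M.det.natAbs : ℕ) : ℂ) else 0))
      = if ∃ z, k = h + Mᵀ.mulVec z then fCoeff d f k else 0 := by
    intro k
    by_cases hc : ∃ z, k - h = Mᵀ.mulVec z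
    · obtain ⟨z, hz⟩ := hc
      rw [if_pos ⟨z, hz⟩, if_pos ⟨z, by rw [← hz]; abel⟩]
      rw [mul_comm (fCoeff d f k), ← mul_assoc, inv_mul_cancel₀ hm0, one_mul]
    · rw [if_neg hc, if_neg (fun hx => hc (by
        obtain ⟨z, hz⟩ := hx
        exact ⟨z, by rw [hz]; abel⟩)), mul_zero, mul_zero]
  rw [tsum_congr h3]
  have hMT : Mᵀ.det ≠ 0 := by rwa [Matrix.det_transpose]
  have hinj2 : Function.Injective fun z : Fin d → ℤ => h + Mᵀ.mulVec z := by
    intro a b hab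
    exact int_mulVec_injective Mᵀ hMT (add_left_cancel hab)
  have hsupp : Function.support (fun k : Fin d → ℤ =>
      if ∃ z, k = h + Mᵀ.mulVec z then fCoeff d f k else 0)
      ⊆ Set.range fun z : Fin d → ℤ => h + Mᵀ.mulVec z := by
    intro k hk
    by_cases hc : ∃ z, k = h + Mᵀ.mulVec z
    · obtain ⟨z, hz⟩ := hc
      exact ⟨z, hz.symm⟩
    · simp only [Function.mem_support, if_neg hc, ne_eq, not_true_eq_false] at hk
  rw [← Function.Injective.tsum_eq hinj2 hsupp]
  exact tsum_congr fun z => by rw [if_pos ⟨z, rfl⟩]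


end ElastFFT
end
end

section
/- Let C⁰ be a positive definite reference stiffness with the usual symmetries. Then for every k ∈ ℝ^d with k ≠ 0, the Green operator symbol satisfies the projection identity Γ̂⁰_k : (C⁰ : (Γ̂⁰_k : E)) = Γ̂⁰_k : E for all E ∈ Sym; i.e. Γ̂⁰_k ∘ C⁰ ∘ Γ̂⁰_k = Γ̂⁰_k, so C⁰ ∘ Γ̂⁰_k is a projection on Sym. -/
open MeasureTheory Complex Matrix
open scoped BigOperators Classical

noncomputable section

namespace ElastFFT

variable (d : ℕ)

/-- D_k* C⁰ D_k u = A(k) u. -/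
lemma key_acoustic (C0 : Fin d → Fin d → Fin d → Fin d → ℝ) (k : Fin d → ℝ) (u : Fin d → ℂ) :
    symGradAdj d k (capply d C0 (symGrad d k u)) = (acoustic d C0 k).mulVec u := by
  funext i
  simp only [acoustic, Matrix.mulVec, dotProduct, Matrix.of_apply, symGradAdj, capply, symGrad,
    Pi.single_apply, mul_ite, ite_mul, mul_zero, zero_mul, mul_one, one_mul,
    Finset.sum_ite_irrel, Finset.sum_const_zero,
    Finset.sum_ite_eq, Finset.sum_ite_eq', Finset.mem_univ, if_true,
    Finset.sum_mul, Finset.mul_sum, mul_add, add_mul, Finset.sum_add_distrib]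
  have rot : ∀ g : Fin d → Fin d → Fin d → ℂ,
      ∑ p, ∑ a, ∑ b, g p a b = ∑ b, ∑ p, ∑ a, g p a b := by
    intro g
    calc ∑ p, ∑ a, ∑ b, g p a b
        = ∑ p, ∑ b, ∑ a, g p a b := Finset.sum_congr rfl fun _ _ => Finset.sum_comm
      _ = ∑ b, ∑ p, ∑ a, g p a b := Finset.sum_comm
  congr 1 <;> congr 1
  · rw [rot fun p a b => -Complex.I / 2 * (k p : ℂ) * ((C0 p i a b : ℂ) * (Complex.I / 2 * ((k a : ℂ) * u b)))]
    exact Finset.sum_congr rfl fun b _ => Finset.sum_congr rfl fun p _ =>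
      Finset.sum_congr rfl fun a _ => by ring
  · rw [Finset.sum_comm]
    exact Finset.sum_congr rfl fun a _ => Finset.sum_congr rfl fun p _ =>
      Finset.sum_congr rfl fun b _ => by ring
  · rw [rot fun p a b => -Complex.I / 2 * (k p : ℂ) * ((C0 i p a b : ℂ) * (Complex.I / 2 * ((k a : ℂ) * u b)))]
    exact Finset.sum_congr rfl fun b _ => Finset.sum_congr rfl fun p _ =>
      Finset.sum_congr rfl fun a _ => by ring
  · rw [Finset.sum_comm]
    exact Finset.sum_congr rfl fun a _ => Finset.sum_congr rfl fun p _ =>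
      Finset.sum_congr rfl fun b _ => by ring

lemma symGrad_isSymm (k : Fin d → ℝ) (u : Fin d → ℂ) : (symGrad d k u).IsSymm := by
  ext i j
  simp only [symGrad, Matrix.transpose_apply, Matrix.of_apply]
  ring

lemma symGrad_eq_zero {k : Fin d → ℝ} (hk : k ≠ 0) {u : Fin d → ℂ}
    (h : symGrad d k u = 0) : u = 0 := by
  obtain ⟨i0, hi0⟩ : ∃ i, k i ≠ 0 := by
    by_contra hc
    push_neg at hc
    exact hk (funext hc)
  have hent : ∀ i j, (k i : ℂ) * u j + u i * (k j : ℂ) = 0 := by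
    intro i j
    have := congrFun (congrFun h i) j
    simp only [symGrad, Matrix.of_apply, Matrix.zero_apply] at this
    have hI : (Complex.I / 2 : ℂ) ≠ 0 := by
      simp [Complex.I_ne_zero]
    exact (mul_eq_zero.mp this).resolve_left hI
  have hk0 : (k i0 : ℂ) ≠ 0 := by exact_mod_cast hi0
  have hu0 : u i0 = 0 := by
    have := hent i0 i0
    have h2 : (2 : ℂ) * ((k i0 : ℂ) * u i0) = 0 := by linear_combination this
    have := mul_eq_zero.mp h2
    rcases this with h | h
    · norm_num at h
    · exact (mul_eq_zero.mp h).resolve_left hk0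
  funext j
  have := hent i0 j
  rw [hu0, zero_mul, add_zero] at this
  exact (mul_eq_zero.mp this).resolve_left hk0

lemma frob_symGrad (k : Fin d → ℝ) (M : Matrix (Fin d) (Fin d) ℂ) (v : Fin d → ℂ) :
    frobInner d M (symGrad d k v) = ∑ j, symGradAdj d k M j * (starRingEnd ℂ) (v j) := by
  simp only [frobInner, symGradAdj, symGrad, Matrix.of_apply, _root_.map_mul, map_add, map_div₀,
    _root_.map_one, Complex.conj_I, Complex.conj_ofReal, map_ofNat, Finset.sum_mul, add_mul,
    mul_add, Finset.sum_add_distrib]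
  congr 1
  · rw [Finset.sum_comm]
    exact Finset.sum_congr rfl fun j _ => Finset.sum_congr rfl fun i _ => by ring
  · exact Finset.sum_congr rfl fun j _ => Finset.sum_congr rfl fun i _ => by ring

lemma acoustic_isUnit_det (C0 : Fin d → Fin d → Fin d → Fin d → ℝ)
    (hC0pos : TensorPosDef d C0) {k : Fin d → ℝ} (hk : k ≠ 0) :
    IsUnit (acoustic d C0 k).det := by
  obtain ⟨c, hc, hpos⟩ := hC0pos
  rw [← Matrix.isUnit_iff_isUnit_det, ← Matrix.mulVec_injective_iff_isUnit]
  have hker : ∀ u : Fin d → ℂ, (acoustic d C0 k).mulVec u = 0 → u = 0 := by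
    intro u hu
    have hfrob : frobInner d (capply d C0 (symGrad d k u)) (symGrad d k u) = 0 := by
      rw [frob_symGrad, key_acoustic d C0 k u, hu]
      simp
    have hS := hpos (symGrad d k u) (symGrad_isSymm d k u)
    rw [hfrob] at hS
    simp only [Complex.zero_re] at hS
    have hSnn : (0 : ℝ) ≤ ∑ i, ∑ j, Complex.normSq (symGrad d k u i j) :=
      Finset.sum_nonneg fun i _ => Finset.sum_nonneg fun j _ => Complex.normSq_nonneg _
    have hS0 : ∑ i, ∑ j, Complex.normSq (symGrad d k u i j) = 0 := by nlinarith
    have hzero : symGrad d k u = 0 := by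
      ext i j
      have h1 := (Finset.sum_eq_zero_iff_of_nonneg
        (fun i _ => Finset.sum_nonneg fun j _ => Complex.normSq_nonneg _)).mp hS0 i
        (Finset.mem_univ i)
      have h2 := (Finset.sum_eq_zero_iff_of_nonneg
        (fun j _ => Complex.normSq_nonneg _)).mp h1 j (Finset.mem_univ j)
      simpa [Complex.normSq_eq_zero] using h2
    exact symGrad_eq_zero d hk hzero
  intro u v huv
  have hz : (acoustic d C0 k).mulVec (u - v) = 0 := by
    rw [Matrix.mulVec_sub, huv, sub_self]
  exact sub_eq_zero.mp (hker _ hz)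

/-- the projection identity Γ̂⁰_k ∘ C⁰ ∘ Γ̂⁰_k = Γ̂⁰_k for k ≠ 0. -/
theorem greenSym_projection
    (d : ℕ) (hd : 0 < d)
    (C0 : Fin d → Fin d → Fin d → Fin d → ℝ)
    (hC0symm : TensorSymm d C0) (hC0pos : TensorPosDef d C0)
    (k : Fin d → ℝ) (hk : k ≠ 0)
    (E : Matrix (Fin d) (Fin d) ℂ) (hE : E.IsSymm) :
    greenSymR d C0 k (capply d C0 (greenSymR d C0 k E)) = greenSymR d C0 k E := by
  have hdet := acoustic_isUnit_det d C0 hC0pos hk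
  unfold greenSymR
  rw [key_acoustic, Matrix.mulVec_mulVec, Matrix.nonsing_inv_mul _ hdet, Matrix.one_mulVec]

end ElastFFT
end
end
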